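/- Let q > 1 be real, d an odd positive integer, χ : ℤ → ℂ a d-periodic function, and ζ a root of unity, and suppose Re(s) > 0. Then the Mellin transform identity (1/Γ(s)) ∫_0^∞ t^{s-1} G_{q,ζ}(t | χ) dt = q/(1+q)^{s-1} ∑_{m=1}^∞ (-1)^m χ(m) ζ^m/(q^m m^s) holds, where G_{q,ζ}(t|χ) = q(1+q) ∑_{m=1}^∞ (-1)^m ζ^m χ(m) q^{-m} e^{-m(1+q)t}. -/

import Mathlib

open MeasureTheory

/-- Mellin transform identity for the generating function of the Dirichlet-type
twisted Eulerian polynomials, for `Re s > 0`. -/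
theorem stmt4 (q : ℝ) (hq : 1 < q) (d : ℕ) (hd : Odd d) (hd0 : 0 < d)
    (χ : ℤ → ℂ) (hχ : ∀ m : ℤ, χ (m + d) = χ m)
    (ζ : ℂ) (hζ : ∃ k : ℕ, 0 < k ∧ ζ ^ k = 1)
    (s : ℂ) (hs : 0 < s.re) :
    (1 / Complex.Gamma s) *
      ∫ t in Set.Ioi (0 : ℝ), (t : ℂ) ^ (s - 1) *
        ((q : ℂ) * (1 + q) * ∑' m : ℕ, (-1 : ℂ) ^ (m + 1) * ζ ^ (m + 1) * χ (m + 1) /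
          (q : ℂ) ^ (m + 1) * Complex.exp (-((m : ℂ) + 1) * (1 + q) * t)) =
    (q : ℂ) / (1 + (q : ℂ)) ^ (s - 1) *
      ∑' m : ℕ, (-1 : ℂ) ^ (m + 1) * χ (m + 1) * ζ ^ (m + 1) /
        ((q : ℂ) ^ (m + 1) * ((m : ℂ) + 1) ^ s) := by
  have hq0 : (0:ℝ) < q := lt_trans one_pos hq
  have h1q : (0:ℝ) < 1 + q := by linarith
  have h1qC : (1 : ℂ) + q ≠ 0 := by
    rw [show (1:ℂ) + q = ((1+q : ℝ) : ℂ) by push_cast; ring]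
    exact Complex.ofReal_ne_zero.mpr h1q.ne'
  have h1qnorm : ‖(1:ℂ) + q‖ = 1 + q := by
    rw [show (1:ℂ) + q = ((1+q : ℝ) : ℂ) by push_cast; ring, Complex.norm_real,
      Real.norm_eq_abs, abs_of_pos h1q]
  -- bound on χ
  obtain ⟨C, hC0, hCb⟩ : ∃ C : ℝ, 0 ≤ C ∧ ∀ n : ℤ, ‖χ n‖ ≤ C := by
    have hper : Function.Periodic χ (d : ℤ) := hχ
    have hd' : (0:ℤ) < (d:ℤ) := by exact_mod_cast hd0
    have h0mem : (0:ℤ) ∈ Finset.Ico (0:ℤ) (d:ℤ) := Finset.mem_Ico.mpr ⟨le_refl 0, hd'⟩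
    have hne : (Finset.Ico (0:ℤ) (d:ℤ)).Nonempty := ⟨0, h0mem⟩
    refine ⟨(Finset.Ico (0:ℤ) (d:ℤ)).sup' hne (fun n => ‖χ n‖), ?_, ?_⟩
    · exact le_trans (norm_nonneg (χ 0)) (Finset.le_sup' (fun n => ‖χ n‖) h0mem)
    · intro n
      have h1 : χ n = χ (n % d) := by
        conv_lhs => rw [← Int.emod_add_mul_ediv n d]
        have := (hper.int_mul (n / d)) (n % d)
        simpa [mul_comm] using this
      rw [h1]
      exact Finset.le_sup' (fun n => ‖χ n‖)
        (Finset.mem_Ico.mpr ⟨Int.emod_nonneg n hd'.ne', Int.emod_lt_of_pos n hd'⟩)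
  -- norm of ζ
  have hζ1 : ‖ζ‖ = 1 := by
    obtain ⟨k, hk, hke⟩ := hζ
    have h := congrArg norm hke
    rw [norm_pow, norm_one] at h
    rcases lt_trichotomy ‖ζ‖ 1 with hlt | heq | hgt
    · exact absurd h (pow_lt_one₀ (norm_nonneg ζ) hlt hk.ne').ne
    · exact heq
    · exact absurd h (one_lt_pow₀ hgt hk.ne').ne'
  -- exact norm of the basic coefficient
  have hterm_norm : ∀ m : ℕ,
      ‖(-1 : ℂ) ^ (m + 1) * ζ ^ (m + 1) * χ (m + 1) / (q : ℂ) ^ (m + 1)‖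
        = ‖χ ((m:ℤ) + 1)‖ * (1/q)^(m+1) := by
    intro m
    simp only [norm_div, norm_mul, norm_pow, norm_neg, norm_one, one_pow,
      Complex.norm_real, Real.norm_eq_abs, abs_of_pos hq0, hζ1, one_mul]
    rw [div_pow, one_pow, div_eq_mul_inv, div_eq_mul_inv, one_mul]
  have hterm_le : ∀ m : ℕ,
      ‖(-1 : ℂ) ^ (m + 1) * ζ ^ (m + 1) * χ (m + 1) / (q : ℂ) ^ (m + 1)‖
        ≤ C * (1/q)^(m+1) := by
    intro m
    rw [hterm_norm m]
    have : (0:ℝ) ≤ (1/q)^(m+1) := by positivity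
    exact mul_le_mul_of_nonneg_right (hCb _) this
  -- set up the data for hasSum_mellin
  set a : ℕ → ℂ := fun m => (q:ℂ) * (1+q) *
    ((-1:ℂ)^(m+1) * ζ^(m+1) * χ (m+1) / (q:ℂ)^(m+1)) with ha_def
  set p : ℕ → ℝ := fun m => ((m:ℝ)+1) * (1+q) with hp_def
  set F : ℝ → ℂ := fun t => (q : ℂ) * (1 + q) *
    ∑' m : ℕ, (-1 : ℂ) ^ (m + 1) * ζ ^ (m + 1) * χ (m + 1) /
      (q : ℂ) ^ (m + 1) * Complex.exp (-((m : ℂ) + 1) * (1 + q) * t) with hF_def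
  have hp_pos : ∀ m : ℕ, 0 < p m := fun m => by
    have : (0:ℝ) < (m:ℝ)+1 := by positivity
    exact mul_pos this h1q
  have hnorm_a : ∀ m : ℕ, ‖a m‖ ≤ q * (1+q) * C * (1/q)^(m+1) := by
    intro m
    rw [ha_def]
    simp only [norm_mul, Complex.norm_real, Real.norm_eq_abs, abs_of_pos hq0, h1qnorm]
    calc q * (1+q) * ‖(-1 : ℂ) ^ (m + 1) * ζ ^ (m + 1) * χ (m + 1) / (q : ℂ) ^ (m + 1)‖
        ≤ q * (1+q) * (C * (1/q)^(m+1)) :=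
          mul_le_mul_of_nonneg_left (hterm_le m) (by positivity)
      _ = q * (1+q) * C * (1/q)^(m+1) := by ring
  have hrq : (0:ℝ) ≤ 1/q := by positivity
  have hrq1 : (1:ℝ)/q < 1 := by rw [div_lt_one hq0]; exact hq
  have hgeo0 : Summable (fun m : ℕ => (1/q)^(m+1)) :=
    (summable_geometric_of_lt_one hrq hrq1).comp_injective (add_left_injective 1)
  -- summability of each t-series
  have hsummable : ∀ t : ℝ, 0 < t → Summable (fun m : ℕ =>
      (-1 : ℂ) ^ (m + 1) * ζ ^ (m + 1) * χ (m + 1) /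
        (q : ℂ) ^ (m + 1) * Complex.exp (-((m : ℂ) + 1) * (1 + q) * t)) := by
    intro t ht
    apply Summable.of_norm
    apply (hgeo0.mul_left C).of_nonneg_of_le (fun m => norm_nonneg _)
    intro m
    rw [norm_mul]
    have h2 : ‖Complex.exp (-((m : ℂ) + 1) * (1 + q) * t)‖ ≤ 1 := by
      have he : (-((m : ℂ) + 1) * (1 + q) * t) = ((-(((m:ℝ)+1) * (1+q) * t) : ℝ) : ℂ) := by
        push_cast; ring
      rw [he, ← Complex.ofReal_exp, Complex.norm_real, Real.norm_eq_abs, Real.abs_exp]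
      apply Real.exp_le_one_iff.mpr
      have : (0:ℝ) < ((m:ℝ)+1) * (1+q) * t := by positivity
      linarith
    calc ‖_‖ * ‖_‖ ≤ (C * (1/q)^(m+1)) * 1 :=
          mul_le_mul (hterm_le m) h2 (norm_nonneg _) (by positivity)
      _ = C * (1/q)^(m+1) := mul_one _
  have hF : ∀ t ∈ Set.Ioi (0:ℝ), HasSum (fun m : ℕ => a m * Real.exp (-p m * t)) (F t) := by
    intro t ht
    rw [Set.mem_Ioi] at ht
    have := ((hsummable t ht).hasSum).mul_left ((q:ℂ) * (1+q))
    convert this using 2 with m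
    · exact rfl
    rw [ha_def]
    have hexp : (Real.exp (-p m * t) : ℂ) = Complex.exp (-((m : ℂ) + 1) * (1 + q) * t) := by
      rw [Complex.ofReal_exp]
      congr 1
      push_cast [hp_def]
      ring
    rw [← hexp]
    ring
  have h_sum : Summable fun m : ℕ => ‖a m‖ / (p m) ^ s.re := by
    apply ((hgeo0.mul_left (q * (1+q) * C / (1+q) ^ s.re))).of_nonneg_of_le
      (fun m => by positivity)
    intro m
    have hple : (1+q) ^ s.re ≤ (p m) ^ s.re := by
      apply Real.rpow_le_rpow h1q.le ?_ hs.le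
      show (1+q) ≤ ((m:ℝ)+1) * (1+q)
      nlinarith [Nat.cast_nonneg (α := ℝ) m]
    have hppos : (0:ℝ) < (1+q) ^ s.re := Real.rpow_pos_of_pos h1q _
    calc ‖a m‖ / (p m) ^ s.re
        ≤ (q * (1+q) * C * (1/q)^(m+1)) / (1+q) ^ s.re :=
          div_le_div₀ (by positivity) (hnorm_a m) hppos hple
      _ = (q * (1+q) * C / (1+q) ^ s.re) * (1/q)^(m+1) := by ring
  -- apply the key mellin lemma
  have key := hasSum_mellin (a := a) (p := p) (F := F) (s := s)
    (fun m => Or.inr (hp_pos m)) hs hF h_sum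
  have hGamma : Complex.Gamma s ≠ 0 := Complex.Gamma_ne_zero_of_re_pos hs
  have hmellin : mellin F s = ∫ t in Set.Ioi (0 : ℝ), (t : ℂ) ^ (s - 1) * F t := by
    simp [mellin, smul_eq_mul]
  rw [show (∫ t in Set.Ioi (0 : ℝ), (t : ℂ) ^ (s - 1) *
        ((q : ℂ) * (1 + q) * ∑' m : ℕ, (-1 : ℂ) ^ (m + 1) * ζ ^ (m + 1) * χ (m + 1) /
          (q : ℂ) ^ (m + 1) * Complex.exp (-((m : ℂ) + 1) * (1 + q) * t))) = mellin F s from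
    by rw [hmellin]]
  rw [← key.tsum_eq, ← tsum_mul_left, ← tsum_mul_left]
  congr 1
  funext m
  -- per-term identity
  have hcpow : ((p m : ℝ) : ℂ) ^ s = ((m:ℂ)+1) ^ s * (1+(q:ℂ)) ^ s := by
    have hpm : ((p m : ℝ) : ℂ) = ((((m:ℝ)+1 : ℝ)) : ℂ) * (((1+q : ℝ)) : ℂ) := by
      simp only [hp_def]; push_cast; ring
    rw [hpm, Complex.mul_cpow_ofReal_nonneg (by positivity) h1q.le]
    norm_num
  have hm0 : ((m:ℂ)+1) ≠ 0 := Nat.cast_add_one_ne_zero m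
  have hm1 : ((m:ℂ)+1) ^ s ≠ 0 := by
    simp [Complex.cpow_def, hm0, Complex.exp_ne_zero]
  have h1qs : (1+(q:ℂ)) ^ s ≠ 0 := by
    simp [Complex.cpow_def, h1qC, Complex.exp_ne_zero]
  have hqm : ((q:ℂ)) ^ (m+1) ≠ 0 :=
    pow_ne_zero _ (Complex.ofReal_ne_zero.mpr hq0.ne')
  have hsub : (1+(q:ℂ)) ^ (s-1) = (1+(q:ℂ)) ^ s / (1+(q:ℂ)) := by
    rw [Complex.cpow_sub _ _ h1qC, Complex.cpow_one]
  rw [hcpow, ha_def, hsub]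
  field_simp
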